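/- Uniqueness direction of Shapley's theorem (symmetry + efficiency on unanimity games): for the unanimity game u_T (where u_T(S) = 1 if T ⊆ S and 0 otherwise, T nonempty), any allocation satisfying efficiency, symmetry, and the dummy-player axiom assigns value 1/|T| to each player in T and 0 to players outside T; the Shapley value φᵢ(u_T) indeed equals 1/|T| for i ∈ T and 0 for i ∉ T. -/
import Mathlib

noncomputable def shapley {ι : Type*} [Fintype ι] [DecidableEq ι] (v : Finset ι → ℝ) (i : ι) : ℝ :=
  ∑ S ∈ (Finset.univ.erase i).powerset,
    (((Fintype.card ι - S.card - 1).factorial * S.card.factorial : ℝ) /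
      (Fintype.card ι).factorial) * (v (insert i S) - v S)

open Finset in
private lemma shapley_hockey (s m : ℕ) :
    ∑ j ∈ range (m + 1), (s + j).choose s = (s + m + 1).choose (s + 1) := by
  have h : ∑ i ∈ Icc s (s + m), i.choose s = ∑ j ∈ range (m + 1), (s + j).choose s := by
    rw [← Finset.Ico_add_one_right_eq_Icc, Finset.sum_Ico_eq_sum_range]
    rw [show s + m + 1 - s = m + 1 from by omega]
  rw [← h, Nat.sum_Icc_choose]

open Finset in
private lemma shapley_key_nat (s m : ℕ) :
    (∑ j ∈ range (m + 1), m.choose j * ((m - j).factorial * (s + j).factorial)) * (s + 1)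
      = (m + s + 1).factorial := by
  have hterm : ∀ j ∈ range (m + 1),
      m.choose j * ((m - j).factorial * (s + j).factorial)
        = m.factorial * s.factorial * (s + j).choose s := by
    intro j hj
    rw [mem_range, Nat.lt_succ_iff] at hj
    apply Nat.eq_of_mul_eq_mul_right (Nat.factorial_pos j)
    have h1 : m.choose j * j.factorial * (m - j).factorial = m.factorial :=
      Nat.choose_mul_factorial_mul_factorial hj
    have h2 : (s + j).choose j * j.factorial * s.factorial = (s + j).factorial := by
      have := Nat.choose_mul_factorial_mul_factorial (Nat.le_add_left j s)
      simpa using this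
    have h3 : (s + j).choose s = (s + j).choose j := by
      have := Nat.choose_symm (Nat.le_add_right s j)
      simpa using this.symm
    calc m.choose j * ((m - j).factorial * (s + j).factorial) * j.factorial
        = (m.choose j * j.factorial * (m - j).factorial) * (s + j).factorial := by ring
      _ = m.factorial * (s + j).factorial := by rw [h1]
      _ = m.factorial * ((s + j).choose j * j.factorial * s.factorial) := by rw [h2]
      _ = m.factorial * s.factorial * (s + j).choose s * j.factorial := by rw [h3]; ring
  rw [Finset.sum_congr rfl hterm, ← Finset.mul_sum, shapley_hockey]
  have h4 : (s + m + 1).choose (s + 1) * (s + 1).factorial * m.factorial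
      = (s + m + 1).factorial := by
    have := Nat.choose_mul_factorial_mul_factorial
      (show s + 1 ≤ s + m + 1 by omega)
    simpa [show s + m + 1 - (s + 1) = m by omega] using this
  calc m.factorial * s.factorial * (s + m + 1).choose (s + 1) * (s + 1)
      = (s + m + 1).choose (s + 1) * (s.factorial * (s + 1)) * m.factorial := by ring
    _ = (s + m + 1).choose (s + 1) * (s + 1).factorial * m.factorial := by
        rw [Nat.factorial_succ]; ring_nf
    _ = (m + s + 1).factorial := by rw [h4]; ring_nf

open Finset in
private lemma shapley_bij {ι : Type*} [Fintype ι] [DecidableEq ι] (T : Finset ι) (i : ι)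
    (hi : i ∈ T) (f : ℕ → ℝ) :
    ∑ S ∈ (Finset.univ.erase i).powerset.filter (fun S => T.erase i ⊆ S), f S.card
      = ∑ A ∈ (Finset.univ \ T).powerset, f (A.card + (T.card - 1)) := by
  apply Finset.sum_nbij' (fun S => S \ T.erase i) (fun A => A ∪ T.erase i)
  · intro S hS
    rw [Finset.mem_filter, Finset.mem_powerset] at hS
    rw [Finset.mem_powerset]
    intro x hx
    rw [Finset.mem_sdiff] at hx
    rw [Finset.mem_sdiff]
    refine ⟨Finset.mem_univ x, fun hxT => ?_⟩
    have hxi : x ≠ i := (Finset.mem_erase.1 (hS.1 hx.1)).1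
    exact hx.2 (Finset.mem_erase.2 ⟨hxi, hxT⟩)
  · intro A hA
    rw [Finset.mem_powerset] at hA
    rw [Finset.mem_filter, Finset.mem_powerset]
    refine ⟨Finset.union_subset ?_ (Finset.erase_subset_erase i T.subset_univ),
      Finset.subset_union_right⟩
    intro x hx
    have := hA hx
    rw [Finset.mem_sdiff] at this
    exact Finset.mem_erase.2 ⟨fun h => this.2 (h ▸ hi), Finset.mem_univ x⟩
  · intro S hS
    rw [Finset.mem_filter] at hS
    exact Finset.sdiff_union_of_subset hS.2
  · intro A hA
    rw [Finset.mem_powerset] at hA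
    have hdisj : Disjoint A (T.erase i) := by
      apply Finset.disjoint_left.2
      intro x hx hxT
      have := hA hx
      rw [Finset.mem_sdiff] at this
      exact this.2 (Finset.mem_of_mem_erase hxT)
    rw [Finset.union_sdiff_cancel_right hdisj]
  · intro S hS
    rw [Finset.mem_filter, Finset.mem_powerset] at hS
    congr 1
    have h0 : (S \ T.erase i).card = S.card - (T.erase i).card :=
      Finset.card_sdiff_of_subset hS.2
    rw [h0, Finset.card_erase_of_mem hi]
    have h1 : (T.erase i).card ≤ S.card := Finset.card_le_card hS.2
    rw [Finset.card_erase_of_mem hi] at h1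
    omega

open Finset in
private lemma shapley_final (n t m : ℕ) (ht : 1 ≤ t) (htn : t ≤ n) (hm : m = n - t)
    {β : Type*} [Fintype β] [DecidableEq β] (U : Finset β) (hU : U.card = m) :
    ∑ A ∈ U.powerset,
      (((n - (A.card + (t - 1)) - 1).factorial * (A.card + (t - 1)).factorial : ℝ)
        / n.factorial) = 1 / t := by
  obtain ⟨s, rfl⟩ : ∃ s, t = s + 1 := ⟨t - 1, by omega⟩
  rw [Finset.sum_powerset_apply_card
    (fun j => (((n - (j + (s + 1 - 1)) - 1).factorial * (j + (s + 1 - 1)).factorial : ℝ)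
      / n.factorial)), hU]
  have hn : n = m + s + 1 := by omega
  subst hn
  have hstep : ∀ j ∈ range (m + 1),
      (m.choose j) • ((((m + s + 1) - (j + (s + 1 - 1)) - 1).factorial
          * (j + (s + 1 - 1)).factorial : ℝ) / (m + s + 1).factorial)
        = (m.choose j * ((m - j).factorial * (s + j).factorial) : ℕ)
            / ((m + s + 1).factorial : ℝ) := by
    intro j hj
    rw [mem_range, Nat.lt_succ_iff] at hj
    rw [show (m + s + 1) - (j + (s + 1 - 1)) - 1 = m - j from by omega,
      show j + (s + 1 - 1) = s + j from by omega, nsmul_eq_mul]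
    push_cast
    ring
  rw [Finset.sum_congr rfl hstep, ← Finset.sum_div, ← Nat.cast_sum]
  have hk := shapley_key_nat s m
  have hfac : (0:ℝ) < ((m + s + 1).factorial : ℝ) := by
    exact_mod_cast Nat.factorial_pos _
  rw [div_eq_div_iff hfac.ne' (by positivity)]
  rw [one_mul, ← hk]
  push_cast
  ring

theorem unanimity_game_unique_allocation {ι : Type*} [Fintype ι] [DecidableEq ι]
    (T : Finset ι) (hT : T.Nonempty) (v : Finset ι → ℝ)
    (hv : ∀ S : Finset ι, v S = if T ⊆ S then 1 else 0)
    (ψ : ι → ℝ)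
    (heff : ∑ i, ψ i = v Finset.univ)
    (hsym : ∀ i j : ι,
      (∀ S : Finset ι, i ∉ S → j ∉ S → v (insert i S) = v (insert j S)) → ψ i = ψ j)
    (hdummy : ∀ i : ι, (∀ S : Finset ι, i ∉ S → v (insert i S) = v S) → ψ i = 0) :
    (∀ i ∈ T, ψ i = 1 / (T.card : ℝ)) ∧ (∀ i ∉ T, ψ i = 0) ∧
      (∀ i ∈ T, shapley v i = 1 / (T.card : ℝ)) ∧ (∀ i ∉ T, shapley v i = 0) := by
  have tpos : 0 < T.card := Finset.card_pos.2 hT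
  have htn : T.card ≤ Fintype.card ι := by
    simpa using Finset.card_le_card T.subset_univ
  have hout : ∀ i ∉ T, ψ i = 0 := by
    intro i hi
    apply hdummy
    intro S hiS
    simp [hv, Finset.subset_insert_iff_of_notMem hi]
  have hψeq : ∀ i ∈ T, ∀ j ∈ T, ψ i = ψ j := by
    intro i hi j hj
    rcases eq_or_ne i j with rfl | hij
    · rfl
    apply hsym
    intro S hiS hjS
    rw [hv, hv, if_neg, if_neg]
    · intro h
      rcases Finset.mem_insert.1 (h hi) with h' | h'
      · exact hij h'
      · exact hiS h'
    · intro h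
      rcases Finset.mem_insert.1 (h hj) with h' | h'
      · exact hij h'.symm
      · exact hjS h'
  have hsumT : ∑ i ∈ T, ψ i = 1 := by
    have h1 : ∑ i ∈ T, ψ i = ∑ i, ψ i :=
      Finset.sum_subset T.subset_univ (fun x _ hx => hout x hx)
    rw [h1, heff, hv, if_pos T.subset_univ]
  have hin : ∀ i ∈ T, ψ i = 1 / (T.card : ℝ) := by
    intro i hi
    have tposR : (0:ℝ) < T.card := by exact_mod_cast tpos
    have h2 : ∑ j ∈ T, ψ j = T.card * ψ i := by
      rw [Finset.sum_congr rfl (fun j hj => hψeq j hj i hi)]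
      simp [mul_comm]
    rw [h2] at hsumT
    field_simp at hsumT ⊢
    linarith
  have hshout : ∀ i ∉ T, shapley v i = 0 := by
    intro i hi
    apply Finset.sum_eq_zero
    intro S hS
    have : v (insert i S) = v S := by
      simp [hv, Finset.subset_insert_iff_of_notMem hi]
    rw [this]; ring
  have hshin : ∀ i ∈ T, shapley v i = 1 / (T.card : ℝ) := by
    intro i hi
    have hfilter : shapley v i =
        ∑ S ∈ (Finset.univ.erase i).powerset.filter (fun S => T.erase i ⊆ S),
          (((Fintype.card ι - S.card - 1).factorial * S.card.factorial : ℝ) /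
            (Fintype.card ι).factorial) := by
      rw [shapley, Finset.sum_filter]
      apply Finset.sum_congr rfl
      intro S hS
      rw [Finset.mem_powerset] at hS
      have hiS : i ∉ S := fun h => (Finset.mem_erase.1 (hS h)).1 rfl
      have h1 : ¬ T ⊆ S := fun h => hiS (h hi)
      have h2 : (T ⊆ insert i S) ↔ T.erase i ⊆ S := by
        rw [Finset.subset_insert_iff]
      by_cases h : T.erase i ⊆ S
      · rw [if_pos h, hv, hv, if_pos (h2.2 h), if_neg h1]; ring
      · rw [if_neg h, hv, hv, if_neg (fun hh => h (h2.1 hh)), if_neg h1]; ring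
    rw [hfilter,
      shapley_bij T i hi (fun c =>
        (((Fintype.card ι - c - 1).factorial * c.factorial : ℝ) / (Fintype.card ι).factorial))]
    apply shapley_final (Fintype.card ι) T.card (Fintype.card ι - T.card) tpos htn rfl
    rw [Finset.card_sdiff_of_subset T.subset_univ, Finset.card_univ]
  exact ⟨hin, hout, hshin, hshout⟩
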